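/- Efficient approximability by matrix-product states from bounded Renyi block entropies: Let d ≥ 2, α ∈ (0, 1) and c > 0. Let (ψ_N)_{N≥1} be a sequence of unit vectors ψ_N ∈ (ℂ^d)^{⊗N} such that for all N and all 1 ≤ n ≤ N, the reduced density matrix ρ_{N,n} of ψ_N on the block {1, …, n} has α-Renyi entropy S_α(ρ_{N,n}) ≤ c. Then for every δ > 0 there exists a polynomial P such that for every N there exists a matrix-product state unit vector φ_N with open boundary conditions and bond dimension D ≤ P(N) satisfying ‖ψ_Nψ_N† − φ_Nφ_N†‖₁ ≤ δ, where ‖·‖₁ is the trace norm. -/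

import Mathlib

open scoped BigOperators
open Matrix

/-- The α-Renyi entropy (in bits) of a matrix: `S_α(ρ) = (1/(1−α))·log₂ ∑ᵢ λᵢ^α` where `λᵢ`
are the eigenvalues (junk value `0` if not Hermitian). -/
noncomputable def renyiEntropy {n : Type*} [Fintype n] [DecidableEq n] (α : ℝ)
    (ρ : Matrix n n ℂ) : ℝ :=
  if h : ρ.IsHermitian then (1 / (1 - α)) * Real.logb 2 (∑ i, h.eigenvalues i ^ α) else 0

open scoped ComplexOrder in
/-- The trace norm `‖M‖₁ = tr[(M†M)^{1/2}]` of a complex matrix. -/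
noncomputable def traceNorm {n : Type*} [Fintype n] [DecidableEq n]
    (M : Matrix n n ℂ) : ℝ :=
  (((Matrix.posSemidef_conjTranspose_mul_self M).1.eigenvectorUnitary.1 *
      Matrix.diagonal (((↑) : ℝ → ℂ) ∘ (√·) ∘ (Matrix.posSemidef_conjTranspose_mul_self M).1.eigenvalues) *
      (star (Matrix.posSemidef_conjTranspose_mul_self M).1.eigenvectorUnitary : Matrix n n ℂ)).trace).re

/-- The reduced density matrix (partial trace over the sites outside `I`). -/
noncomputable def reduced {V : Type*} [Fintype V] [DecidableEq V] {d : ℕ} (I : Finset V)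
    (ρ : Matrix (V → Fin d) (V → Fin d) ℂ) :
    Matrix ({i // i ∈ I} → Fin d) ({i // i ∈ I} → Fin d) ℂ :=
  fun x y => ∑ z : {i // i ∉ I} → Fin d,
    ρ (fun i => if h : i ∈ I then x ⟨i, h⟩ else z ⟨i, h⟩)
      (fun i => if h : i ∈ I then y ⟨i, h⟩ else z ⟨i, h⟩)

/-- `φ` is a matrix-product state with open boundary conditions and bond dimension `D`:
its amplitudes are `φ(i₁,…,i_N) = v† A^{(1)}[i₁] ⋯ A^{(N)}[i_N] w` for `D×D` matrices
`A^{(k)}[j]` and boundary vectors `v, w` (the 1×D row and D×1 column matrices of the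
valence-bond construction being absorbed into boundary vectors). -/
def IsMPSOpen {d N : ℕ} (D : ℕ) (φ : (Fin N → Fin d) → ℂ) : Prop :=
  ∃ (A : Fin N → Fin d → Matrix (Fin D) (Fin D) ℂ) (v w : Fin D → ℂ),
    ∀ x, φ x = v ⬝ᵥ ((List.ofFn fun k => A k (x k)).prod).mulVec w

namespace MPSAux
open scoped ComplexOrder

variable {J : Type*} [Fintype J]

noncomputable def nrm (f : J → ℂ) : ℝ := Real.sqrt (∑ j, ‖f j‖ ^ 2)

lemma nrm_nonneg (f : J → ℂ) : 0 ≤ nrm f := Real.sqrt_nonneg _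

lemma nrm_sq (f : J → ℂ) : nrm f ^ 2 = ∑ j, ‖f j‖ ^ 2 :=
  Real.sq_sqrt (by positivity)

lemma nrm_eq_norm (f : J → ℂ) : nrm f = ‖(WithLp.equiv 2 (J → ℂ)).symm f‖ := by
  rw [EuclideanSpace.norm_eq]; rfl

lemma nrm_add_le (f g : J → ℂ) : nrm (f + g) ≤ nrm f + nrm g := by
  rw [nrm_eq_norm, nrm_eq_norm, nrm_eq_norm]; exact norm_add_le ((WithLp.equiv 2 (J → ℂ)).symm f)
    ((WithLp.equiv 2 (J → ℂ)).symm g)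

lemma nrm_neg (f : J → ℂ) : nrm (-f) = nrm f := by
  rw [nrm_eq_norm, nrm_eq_norm]; exact norm_neg ((WithLp.equiv 2 (J → ℂ)).symm f)

lemma nrm_sub_le (f g : J → ℂ) : nrm (f - g) ≤ nrm f + nrm g := by
  simpa [sub_eq_add_neg, nrm_neg] using nrm_add_le f (-g)

lemma nrm_sub_rev (f g : J → ℂ) : nrm (f - g) = nrm (g - f) := by
  rw [← nrm_neg, neg_sub]

lemma nrm_triangle (f g h : J → ℂ) : nrm (f - h) ≤ nrm (f - g) + nrm (g - h) := by
  simpa using nrm_add_le (f - g) (g - h)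

lemma abs_nrm_sub_nrm_le (f g : J → ℂ) : |nrm f - nrm g| ≤ nrm (f - g) := by
  rw [nrm_eq_norm, nrm_eq_norm, nrm_eq_norm]; exact abs_norm_sub_norm_le ((WithLp.equiv 2 (J → ℂ)).symm f)
    ((WithLp.equiv 2 (J → ℂ)).symm g)

lemma nrm_smul (a : ℂ) (f : J → ℂ) : nrm (a • f) = ‖a‖ * nrm f := by
  rw [nrm_eq_norm, nrm_eq_norm]; exact norm_smul a ((WithLp.equiv 2 (J → ℂ)).symm f)

lemma nrm_zero : nrm (0 : J → ℂ) = 0 := by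
  simp [nrm]

lemma nrm_mono_of_sq_le {f : J → ℂ} {t : ℝ} (h : ∑ j, ‖f j‖ ^ 2 ≤ t) : nrm f ≤ Real.sqrt t :=
  Real.sqrt_le_sqrt h

/-- Selection of the `m` largest values. -/
lemma exists_top_subset {ι : Type*} [Fintype ι] [DecidableEq ι] (lam : ι → ℝ) (m : ℕ)
    (hm : m ≤ Fintype.card ι) :
    ∃ S : Finset ι, S.card = m ∧ ∀ i ∈ S, ∀ j ∉ S, lam j ≤ lam i := by
  induction m with
  | zero => exact ⟨∅, rfl, by simp⟩
  | succ m ih =>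
    obtain ⟨S, hcard, htop⟩ := ih (le_trans (Nat.le_succ m) hm)
    have hne : Sᶜ.Nonempty := by
      rw [← Finset.card_pos, Finset.card_compl, hcard]
      omega
    obtain ⟨j₀, hj₀, hmax⟩ := Finset.exists_max_image Sᶜ lam hne
    refine ⟨insert j₀ S, ?_, ?_⟩
    · rw [Finset.card_insert_of_notMem (Finset.mem_compl.mp hj₀), hcard]
    · intro i hi j hj
      have hjS : j ∉ S := fun h => hj (Finset.mem_insert_of_mem h)
      rcases Finset.mem_insert.mp hi with rfl | hiS
      · exact hmax j (Finset.mem_compl.mpr hjS)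
      · exact htop i hiS j hjS

/-- The Renyi tail bound: if `∑ λᵢ^α ≤ K` then the best rank-`D` truncation has tail
at most `K * (K/D)^((1-α)/α)`. -/
lemma tail_bound {ι : Type*} [Fintype ι] [DecidableEq ι] (lam : ι → ℝ)
    (hnn : ∀ i, 0 ≤ lam i) {α K : ℝ} (hα0 : 0 < α) (hα1 : α < 1) (hK : 1 ≤ K)
    (hpow : ∑ i, lam i ^ α ≤ K) (D : ℕ) (hD : 0 < D) :
    ∃ S : Finset ι, S.card ≤ D ∧ ∑ i ∈ Sᶜ, lam i ≤ K * (K / D) ^ ((1 - α) / α) := by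
  have hKpos : (0:ℝ) < K := lt_of_lt_of_le one_pos hK
  by_cases hcard : Fintype.card ι ≤ D
  · refine ⟨Finset.univ, by simpa using hcard, ?_⟩
    simp only [Finset.compl_univ, Finset.sum_empty]
    positivity
  · push_neg at hcard
    obtain ⟨S, hScard, htop⟩ := exists_top_subset lam D hcard.le
    refine ⟨S, hScard.le, ?_⟩
    set t : ℝ := (K / D) ^ (α⁻¹) with ht
    have htpos : 0 ≤ t := Real.rpow_nonneg (by positivity) _
    -- each excluded eigenvalue is at most t
    have hsmall : ∀ j ∉ S, lam j ≤ t := by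
      intro j hj
      have h1 : (D : ℝ) * lam j ^ α ≤ ∑ i ∈ S, lam i ^ α := by
        calc (D:ℝ) * lam j ^ α = ∑ _i ∈ S, lam j ^ α := by
              rw [Finset.sum_const, hScard, nsmul_eq_mul]
          _ ≤ ∑ i ∈ S, lam i ^ α := Finset.sum_le_sum fun i hi =>
              Real.rpow_le_rpow (hnn j) (htop i hi j hj) hα0.le
      have h2 : ∑ i ∈ S, lam i ^ α ≤ K := by
        refine le_trans ?_ hpow
        exact Finset.sum_le_sum_of_subset_of_nonneg (Finset.subset_univ S)
          (fun i _ _ => Real.rpow_nonneg (hnn i) _)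
      have hDpos : (0:ℝ) < D := by exact_mod_cast hD
      have h3 : lam j ^ α ≤ K / D := by
        rw [le_div_iff₀ hDpos]; linarith [h1.trans h2]
      calc lam j = (lam j ^ α) ^ (α⁻¹) := by
            rw [← Real.rpow_mul (hnn j), mul_inv_cancel₀ hα0.ne', Real.rpow_one]
          _ ≤ t := Real.rpow_le_rpow (Real.rpow_nonneg (hnn j) _) h3 (by positivity)
    have key : ∑ i ∈ Sᶜ, lam i ≤ t ^ (1 - α) * K := by
      have : ∀ j ∈ Sᶜ, lam j ≤ lam j ^ α * t ^ (1 - α) := by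
        intro j hj
        rcases eq_or_lt_of_le (hnn j) with h0 | h0
        · rw [← h0, Real.zero_rpow hα0.ne']; simp
        · calc lam j = lam j ^ α * lam j ^ (1 - α) := by
                rw [← Real.rpow_add h0]; simp
              _ ≤ lam j ^ α * t ^ (1 - α) := by
                refine mul_le_mul_of_nonneg_left ?_ (Real.rpow_nonneg (hnn j) _)
                exact Real.rpow_le_rpow (hnn j) (hsmall j (Finset.mem_compl.mp hj))
                  (by linarith)
      calc ∑ i ∈ Sᶜ, lam i ≤ ∑ i ∈ Sᶜ, lam i ^ α * t ^ (1 - α) :=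
            Finset.sum_le_sum this
        _ = (∑ i ∈ Sᶜ, lam i ^ α) * t ^ (1 - α) := by rw [Finset.sum_mul]
        _ ≤ K * t ^ (1 - α) := by
            refine mul_le_mul_of_nonneg_right ?_ (Real.rpow_nonneg htpos _)
            refine le_trans ?_ hpow
            exact Finset.sum_le_sum_of_subset_of_nonneg (Finset.subset_univ _)
              (fun i _ _ => Real.rpow_nonneg (hnn i) _)
        _ = t ^ (1 - α) * K := mul_comm _ _
    refine key.trans ?_
    rw [ht, ← Real.rpow_mul (by positivity)]
    rw [show α⁻¹ * (1 - α) = (1 - α) / α by field_simp]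
    rw [mul_comm]


section Cuts

variable {d : ℕ} {N : ℕ}

/-- The block `{0, …, n-1}` as a `Finset (Fin N)`. -/
def Idx (N n : ℕ) : Finset (Fin N) := Finset.univ.filter fun i : Fin N => (i : ℕ) < n

lemma mem_Idx {N n : ℕ} {i : Fin N} : i ∈ Idx N n ↔ (i : ℕ) < n := by
  simp [Idx]

/-- Configurations of the left block. -/
abbrev LtT (d N n : ℕ) := {i : Fin N // i ∈ Idx N n} → Fin d
/-- Configurations of the right block. -/
abbrev RtT (d N n : ℕ) := {i : Fin N // i ∉ Idx N n} → Fin d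

/-- Merging left and right configurations. -/
def mrg (n : ℕ) (x : LtT d N n) (z : RtT d N n) : Fin N → Fin d :=
  fun i => if h : i ∈ Idx N n then x ⟨i, h⟩ else z ⟨i, h⟩

def splitL (n : ℕ) (v : Fin N → Fin d) : LtT d N n := fun i => v i
def splitR (n : ℕ) (v : Fin N → Fin d) : RtT d N n := fun i => v i

@[simp] lemma mrg_split (n : ℕ) (v : Fin N → Fin d) :
    mrg n (splitL n v) (splitR n v) = v := by
  funext i; simp only [mrg, splitL, splitR]; split <;> rfl

@[simp] lemma splitL_mrg (n : ℕ) (x : LtT d N n) (z : RtT d N n) :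
    splitL n (mrg n x z) = x := by
  funext i; simp only [mrg, splitL]; rw [dif_pos i.2]

@[simp] lemma splitR_mrg (n : ℕ) (x : LtT d N n) (z : RtT d N n) :
    splitR n (mrg n x z) = z := by
  funext i; simp only [mrg, splitR]; rw [dif_neg i.2]

/-- `mrg` as an equivalence. -/
def mrgEquiv (n : ℕ) : (LtT d N n × RtT d N n) ≃ (Fin N → Fin d) where
  toFun p := mrg n p.1 p.2
  invFun v := (splitL n v, splitR n v)
  left_inv p := by simp
  right_inv v := by simp

/-- The matricization of a state at cut `n`. -/
def matn (n : ℕ) (χ : (Fin N → Fin d) → ℂ) : Matrix (LtT d N n) (RtT d N n) ℂ :=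
  Matrix.of fun x z => χ (mrg n x z)

lemma matn_sub (n : ℕ) (χ χ' : (Fin N → Fin d) → ℂ) :
    matn n (χ - χ') = matn n χ - matn n χ' := rfl

/-- A slice of the state: the function on the right block obtained by fixing the left block. -/
def rfun (n : ℕ) (χ : (Fin N → Fin d) → ℂ) (x : LtT d N n) : RtT d N n → ℂ :=
  fun z => χ (mrg n x z)

/-- The span of the right slices of a state at cut `n`. -/
noncomputable def Vsp (n : ℕ) (χ : (Fin N → Fin d) → ℂ) : Submodule ℂ (RtT d N n → ℂ) :=
  Submodule.span ℂ (Set.range (rfun n χ))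

instance : IsEmpty {i : Fin N // i ∈ Idx N 0} :=
  ⟨fun i => by have := mem_Idx.mp i.2; omega⟩

instance : IsEmpty {i : Fin N // i ∉ Idx N N} :=
  ⟨fun i => i.2 (mem_Idx.mpr i.1.2)⟩

/-- Extending a left configuration by one site. -/
def extLt (n : ℕ) (hn : n < N) (x : LtT d N n) (j : Fin d) : LtT d N (n + 1) :=
  fun i => if h : (i.1 : ℕ) < n then x ⟨i.1, mem_Idx.mpr h⟩ else j

/-- Prepending a site value to a right configuration. -/
def comb (n : ℕ) (j : Fin d) (z : RtT d N (n + 1)) : RtT d N n :=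
  fun i => if h : (i.1 : ℕ) = n then j
    else z ⟨i.1, fun hmem => by
      have h2 := mem_Idx.mp hmem
      have h3 : ¬ ((i.1 : ℕ) < n) := fun hc => i.2 (mem_Idx.mpr hc)
      omega⟩

lemma mrg_comb (n : ℕ) (hn : n < N) (x : LtT d N n) (j : Fin d) (z : RtT d N (n + 1)) :
    mrg n x (comb n j z) = mrg (n + 1) (extLt n hn x j) z := by
  funext i
  simp only [mrg, comb, extLt, mem_Idx]
  split_ifs <;> first | rfl | omega

lemma splitR_eq_comb (n : ℕ) (hn : n < N) (v : Fin N → Fin d) :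
    splitR n v = comb n (v ⟨n, hn⟩) (splitR (n + 1) v) := by
  funext i
  unfold splitR comb
  rcases eq_or_ne (i.1 : ℕ) n with h | h
  · rw [dif_pos h]
    congr 1
    exact Fin.ext h
  · rw [dif_neg h]

lemma mrg_zero (x : LtT d N 0) (v : Fin N → Fin d) :
    mrg 0 x (splitR 0 v) = v := by
  funext i
  simp only [mrg, splitR, mem_Idx]
  split_ifs <;> first | rfl | omega

/-- Restriction of a left configuration to a smaller block. -/
def restr (m n : ℕ) (hmn : n ≤ m) (x : LtT d N m) : LtT d N n :=
  fun i => x ⟨i.1, mem_Idx.mpr (by have := mem_Idx.mp i.2; omega)⟩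

/-- Replacing the first `n` sites of a left `m`-configuration. -/
def repl (m n : ℕ) (hmn : n ≤ m) (x : LtT d N m) (x' : LtT d N n) : LtT d N m :=
  fun i => if h : (i.1 : ℕ) < n then x' ⟨i.1, mem_Idx.mpr h⟩ else x i

lemma splitL_mrg_of_le (m n : ℕ) (hmn : n ≤ m) (x : LtT d N m) (z : RtT d N m) :
    splitL n (mrg m x z) = restr m n hmn x := by
  funext i
  have hi := mem_Idx.mp i.2
  simp only [splitL, mrg, restr, mem_Idx]
  split_ifs <;> first | rfl | omega

lemma mrg_of_le (m n : ℕ) (hmn : n ≤ m) (x : LtT d N m) (x' : LtT d N n)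
    (z : RtT d N m) :
    mrg n x' (splitR n (mrg m x z)) = mrg m (repl m n hmn x x') z := by
  funext i
  simp only [mrg, splitR, repl, mem_Idx]
  split_ifs <;> first | rfl | omega

end Cuts

section MPSBuild

variable {d N : ℕ}

lemma isMPSOpen_of_finrank_le (D : ℕ) (hd : 0 < d) (hD : 1 ≤ D)
    (φ : (Fin N → Fin d) → ℂ)
    (h : ∀ n, n ≤ N → Module.finrank ℂ (Vsp n φ) ≤ D) : IsMPSOpen D φ := by
  classical
  -- spanning families of bounded size for each cut
  have hg : ∀ n, ∃ g : Fin D → (RtT d N n → ℂ), n ≤ N →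
      Submodule.span ℂ (Set.range g) = Vsp n φ := by
    intro n
    by_cases hn : n ≤ N
    · have hr : Module.finrank ℂ (Vsp n φ) ≤ D := h n hn
      let b := Module.finBasis ℂ (Vsp n φ)
      refine ⟨fun i => if hi : (i : ℕ) < Module.finrank ℂ (Vsp n φ)
        then (b ⟨i, hi⟩ : RtT d N n → ℂ) else 0, fun _ => ?_⟩
      apply le_antisymm
      · rw [Submodule.span_le]
        rintro _ ⟨i, rfl⟩
        by_cases hi : (i : ℕ) < Module.finrank ℂ (Vsp n φ)
        · simp only [dif_pos hi]; exact (b ⟨i, hi⟩).2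
        · simp only [dif_neg hi]; exact (Vsp n φ).zero_mem
      · conv_lhs => rw [← Submodule.map_subtype_top (Vsp n φ), ← b.span_eq,
          Submodule.map_span]
        apply Submodule.span_mono
        rintro _ ⟨_, ⟨i, rfl⟩, rfl⟩
        refine ⟨⟨(i : ℕ), lt_of_lt_of_le i.2 hr⟩, ?_⟩
        dsimp only
        rw [dif_pos i.2]
        simp
    · exact ⟨fun _ => 0, fun hle => absurd hle hn⟩
  choose g hg using hg
  have hgmem : ∀ n, n ≤ N → ∀ b : Fin D, g n b ∈ Vsp n φ := by
    intro n hn b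
    rw [← hg n hn]
    exact Submodule.subset_span (Set.mem_range_self b)
  -- transfer coefficients
  have hA : ∀ n (j : Fin d) (b : Fin D), ∃ cvec : Fin D → ℂ, n < N →
      (fun z => g n b (comb n j z)) = ∑ c, cvec c • g (n + 1) c := by
    intro n j b
    by_cases hn : n < N
    · have hmem : (fun z => g n b (comb n j z)) ∈ Vsp (n + 1) φ := by
        have h2 : Submodule.map (LinearMap.funLeft ℂ ℂ (comb n j)) (Vsp n φ)
            ≤ Vsp (n + 1) φ := by
          rw [Vsp, Submodule.map_span, Submodule.span_le]
          rintro _ ⟨_, ⟨x, rfl⟩, rfl⟩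
          refine Submodule.subset_span ⟨extLt n hn x j, ?_⟩
          funext z
          simp only [rfun, LinearMap.funLeft_apply, Function.comp_apply]
          rw [mrg_comb n hn]
        exact h2 ⟨g n b, hgmem n hn.le b, rfl⟩
      rw [← hg (n + 1) hn] at hmem
      obtain ⟨cvec, hc⟩ := (Submodule.mem_span_range_iff_exists_fun ℂ).mp hmem
      exact ⟨cvec, fun _ => hc.symm⟩
    · exact ⟨0, fun hc => absurd hc hn⟩
  choose A hA using hA
  set Amat : ℕ → Fin d → Matrix (Fin D) (Fin D) ℂ :=
    fun n j => Matrix.of fun b c => A n j b c with hAmat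
  set w : Fin D → ℂ := fun b => g N b default with hw
  set xt : (Fin N → Fin d) → ℕ → Fin d :=
    fun x m => if hm : m < N then x ⟨m, hm⟩ else ⟨0, hd⟩ with hxt
  have unroll : ∀ k n, n + k = N → ∀ (b : Fin D) (x : Fin N → Fin d),
      g n b (splitR n x) =
        Pi.single b 1 ⬝ᵥ
          ((List.ofFn fun i : Fin k => Amat (n + i) (xt x (n + i))).prod).mulVec w := by
    intro k
    induction k with
    | zero =>
      intro n hn b x
      have hnn : n = N := by omega
      subst hnn
      simp only [List.ofFn_zero, List.prod_nil, Matrix.one_mulVec,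
        single_dotProduct, one_mul]
      rw [Subsingleton.elim (splitR n x) default]
    | succ k ih =>
      intro n hn b x
      have hnN : n < N := by omega
      have hsp : splitR n x = comb n (x ⟨n, hnN⟩) (splitR (n + 1) x) :=
        splitR_eq_comb _ hnN x
      have hstep := congrFun (hA n (x ⟨n, hnN⟩) b hnN) (splitR (n + 1) x)
      rw [hsp, hstep]
      have hofn : (List.ofFn fun i : Fin (k + 1) => Amat (n + i) (xt x (n + i))) =
          Amat n (xt x n) ::
            List.ofFn fun i : Fin k => Amat (n + 1 + i) (xt x (n + 1 + i)) := by
        rw [List.ofFn_succ]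
        refine congrArg₂ List.cons ?_ ?_
        · norm_num
        · refine congrArg List.ofFn (funext fun i => ?_)
          have e : n + ((i : ℕ) + 1) = n + 1 + (i : ℕ) := by omega
          rw [Fin.val_succ, e]
      rw [hofn, List.prod_cons, ← Matrix.mulVec_mulVec, single_dotProduct, one_mul]
      have hxtn : xt x n = x ⟨n, hnN⟩ := dif_pos hnN
      rw [hxtn]
      rw [Finset.sum_apply]
      simp only [Pi.smul_apply, smul_eq_mul]
      rw [Matrix.mulVec]
      simp only [dotProduct]
      refine Finset.sum_congr rfl fun c _ => ?_
      rw [ih (n + 1) (by omega) c x, single_dotProduct, one_mul]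
      rfl
  -- initial coefficients
  have h0 : rfun 0 φ default ∈ Vsp 0 φ := Submodule.subset_span (Set.mem_range_self _)
  rw [← hg 0 (Nat.zero_le N)] at h0
  obtain ⟨v, hv⟩ := (Submodule.mem_span_range_iff_exists_fun ℂ).mp h0
  refine ⟨fun kk => Amat (kk : ℕ), v, w, ?_⟩
  intro x
  have hφ : φ x = rfun 0 φ default (splitR 0 x) := by
    simp only [rfun, mrg_zero]
  rw [hφ, ← hv, Finset.sum_apply]
  have huk := unroll N 0 (Nat.zero_add N)
  have hlist : (List.ofFn fun i : Fin N => Amat (0 + (i : ℕ)) (xt x (0 + (i : ℕ)))) =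
      List.ofFn fun kk : Fin N => Amat (kk : ℕ) (x kk) := by
    refine congrArg List.ofFn (funext fun i => ?_)
    rw [Nat.zero_add]
    congr 1
    simp only [hxt]
    rw [dif_pos i.2]
  calc ∑ b, (v b • g 0 b) (splitR 0 x)
      = ∑ b, v b * (Pi.single b 1 ⬝ᵥ
          ((List.ofFn fun kk : Fin N => Amat (kk : ℕ) (x kk)).prod).mulVec w) := by
        refine Finset.sum_congr rfl fun b _ => ?_
        rw [Pi.smul_apply, smul_eq_mul, huk b x, hlist]
    _ = v ⬝ᵥ ((List.ofFn fun kk : Fin N => Amat (kk : ℕ) (x kk)).prod).mulVec w := by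
        simp only [single_dotProduct, one_mul]
        rfl

end MPSBuild

section Frob

variable {I J : Type*} [Fintype I] [Fintype J] [DecidableEq I]

/-- The Frobenius norm of a complex matrix. -/
noncomputable def frob (X : Matrix I J ℂ) : ℝ := nrm (fun p : I × J => X p.1 p.2)

lemma frob_nonneg (X : Matrix I J ℂ) : 0 ≤ frob X := nrm_nonneg _

lemma frob_sq (X : Matrix I J ℂ) : frob X ^ 2 = ∑ i, ∑ j, ‖X i j‖ ^ 2 := by
  rw [frob, nrm_sq, Fintype.sum_prod_type]

lemma frob_sq_trace (X : Matrix I J ℂ) : frob X ^ 2 = (Matrix.trace (Xᴴ * X)).re := by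
  rw [frob_sq, Matrix.trace]
  unfold Matrix.diag
  rw [Complex.re_sum, Finset.sum_comm]
  refine Finset.sum_congr rfl fun i _ => ?_
  rw [Matrix.mul_apply, Complex.re_sum]
  refine Finset.sum_congr rfl fun j _ => ?_
  rw [Matrix.conjTranspose_apply]
  rw [mul_comm]
  rw [show star (X j i) = starRingEnd ℂ (X j i) from rfl, Complex.mul_conj]
  rw [Complex.ofReal_re, Complex.sq_norm]

lemma frob_unitary_left {U : Matrix I I ℂ} (hU : U ∈ Matrix.unitaryGroup I ℂ)
    (X : Matrix I J ℂ) : frob (U * X) = frob X := by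
  have h1 : frob (U * X) ^ 2 = frob X ^ 2 := by
    rw [frob_sq_trace, frob_sq_trace, Matrix.conjTranspose_mul, Matrix.mul_assoc,
      ← Matrix.mul_assoc Uᴴ U X, ← Matrix.star_eq_conjTranspose U,
      (Matrix.mem_unitaryGroup_iff'.mp hU), Matrix.one_mul]
  have := congrArg Real.sqrt h1
  rwa [Real.sqrt_sq (frob_nonneg _), Real.sqrt_sq (frob_nonneg _)] at this

lemma frob_diag_mul_le (c : I → ℂ) (hc : ∀ i, ‖c i‖ ≤ 1) (X : Matrix I J ℂ) :
    frob (Matrix.diagonal c * X) ≤ frob X := by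
  rw [frob, frob, nrm, nrm]
  apply Real.sqrt_le_sqrt
  refine Finset.sum_le_sum fun p _ => ?_
  rw [Matrix.diagonal_mul, norm_mul, mul_pow]
  calc ‖c p.1‖ ^ 2 * ‖X p.1 p.2‖ ^ 2 ≤ 1 * ‖X p.1 p.2‖ ^ 2 := by
        refine mul_le_mul_of_nonneg_right ?_ (sq_nonneg _)
        calc ‖c p.1‖ ^ 2 ≤ 1 ^ 2 := pow_le_pow_left₀ (norm_nonneg _) (hc p.1) 2
          _ = 1 := one_pow 2
    _ = ‖X p.1 p.2‖ ^ 2 := one_mul _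

end Frob

section Trunc

variable {d N : ℕ}

lemma nrm_eq_frob_matn (n : ℕ) (χ : (Fin N → Fin d) → ℂ) :
    nrm χ = frob (matn n χ) := by
  rw [nrm, frob, nrm]
  congr 1
  rw [← Equiv.sum_comp (mrgEquiv (d := d) (N := N) n) (fun v => ‖χ v‖ ^ 2)]
  exact Finset.sum_congr rfl fun p _ => rfl

/-- Truncation of a state at cut `n` using the matrix `P` on the left factor. -/
noncomputable def Tcut (n : ℕ) (P : Matrix (LtT d N n) (LtT d N n) ℂ)
    (χ : (Fin N → Fin d) → ℂ) : (Fin N → Fin d) → ℂ :=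
  fun v => (P * matn n χ) (splitL n v) (splitR n v)

lemma matn_Tcut (n : ℕ) (P : Matrix (LtT d N n) (LtT d N n) ℂ) (χ : (Fin N → Fin d) → ℂ) :
    matn n (Tcut n P χ) = P * matn n χ := by
  ext x z
  show Tcut n P χ (mrg n x z) = _
  rw [Tcut, splitL_mrg, splitR_mrg]

lemma Tcut_sub (n : ℕ) (P : Matrix (LtT d N n) (LtT d N n) ℂ) (χ χ' : (Fin N → Fin d) → ℂ) :
    Tcut n P (χ - χ') = Tcut n P χ - Tcut n P χ' := by
  funext v
  simp only [Tcut, matn_sub, Matrix.mul_sub, Matrix.sub_apply, Pi.sub_apply]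

/-- Slices of a truncated state at a larger cut stay in the slice span. -/
lemma Vsp_Tcut_le (j m : ℕ) (hjm : j ≤ m) (P : Matrix (LtT d N j) (LtT d N j) ℂ)
    (χ : (Fin N → Fin d) → ℂ) : Vsp m (Tcut j P χ) ≤ Vsp m χ := by
  rw [Vsp, Submodule.span_le]
  rintro _ ⟨x, rfl⟩
  have hgen : rfun m (Tcut j P χ) x
      = ∑ x', P (restr m j hjm x) x' • rfun m χ (repl m j hjm x x') := by
    funext z
    rw [Finset.sum_apply]
    simp only [Pi.smul_apply, smul_eq_mul]
    rw [rfun, Tcut, splitL_mrg_of_le m j hjm, Matrix.mul_apply]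
    refine Finset.sum_congr rfl fun x' _ => ?_
    show _ * matn j χ x' (splitR j (mrg m x z)) = _
    rw [matn]
    show _ * χ (mrg j x' (splitR j (mrg m x z))) = _
    rw [mrg_of_le m j hjm]
    rfl
  rw [hgen]
  exact Submodule.sum_mem _ fun x' _ => Submodule.smul_mem _ _
    (Submodule.subset_span (Set.mem_range_self _))

end Trunc

section Spectral

variable {d N : ℕ}

/-- The reduced density matrix at cut `n` as `M Mᴴ`. -/
noncomputable def rhoM (ψ : (Fin N → Fin d) → ℂ) (n : ℕ) :
    Matrix (LtT d N n) (LtT d N n) ℂ := matn n ψ * (matn n ψ)ᴴ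

lemma rhoM_psd (ψ : (Fin N → Fin d) → ℂ) (n : ℕ) : (rhoM ψ n).PosSemidef :=
  Matrix.posSemidef_self_mul_conjTranspose _

/-- Eigenvalues of the reduced density matrix. -/
noncomputable def eig (ψ : (Fin N → Fin d) → ℂ) (n : ℕ) : LtT d N n → ℝ :=
  (rhoM_psd ψ n).1.eigenvalues

lemma eig_nonneg (ψ : (Fin N → Fin d) → ℂ) (n : ℕ) (i : LtT d N n) : 0 ≤ eig ψ n i :=
  (rhoM_psd ψ n).eigenvalues_nonneg i

/-- Eigenvector unitary of the reduced density matrix. -/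
noncomputable def Umat (ψ : (Fin N → Fin d) → ℂ) (n : ℕ) :
    Matrix (LtT d N n) (LtT d N n) ℂ :=
  ((rhoM_psd ψ n).1.eigenvectorUnitary : Matrix (LtT d N n) (LtT d N n) ℂ)

lemma Umat_mem (ψ : (Fin N → Fin d) → ℂ) (n : ℕ) :
    Umat ψ n ∈ Matrix.unitaryGroup (LtT d N n) ℂ :=
  (rhoM_psd ψ n).1.eigenvectorUnitary.2

lemma Umat_star_mul (ψ : (Fin N → Fin d) → ℂ) (n : ℕ) :
    star (Umat ψ n) * Umat ψ n = 1 :=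
  Matrix.mem_unitaryGroup_iff'.mp (Umat_mem ψ n)

lemma Umat_mul_star (ψ : (Fin N → Fin d) → ℂ) (n : ℕ) :
    Umat ψ n * star (Umat ψ n) = 1 :=
  Matrix.mem_unitaryGroup_iff.mp (Umat_mem ψ n)

lemma rhoM_spectral (ψ : (Fin N → Fin d) → ℂ) (n : ℕ) :
    rhoM ψ n = Umat ψ n * Matrix.diagonal (Complex.ofReal ∘ eig ψ n) * star (Umat ψ n) :=
  (rhoM_psd ψ n).1.spectral_theorem

/-- Spectral truncation projector onto the eigenvectors indexed by `S`. -/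
noncomputable def Pproj (ψ : (Fin N → Fin d) → ℂ) (n : ℕ) (S : Finset (LtT d N n)) :
    Matrix (LtT d N n) (LtT d N n) ℂ :=
  Umat ψ n * Matrix.diagonal (fun i => if i ∈ S then (1 : ℂ) else 0) * star (Umat ψ n)

lemma reduced_eq_rhoM (ψ : (Fin N → Fin d) → ℂ) (n : ℕ) :
    reduced (Idx N n) (Matrix.of fun x y => ψ x * starRingEnd ℂ (ψ y)) = rhoM ψ n := by
  ext x y
  simp only [reduced, rhoM, Matrix.mul_apply, Matrix.conjTranspose_apply, matn,
    Matrix.of_apply, mrg]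
  rfl

/-- decomposition `P * X = U * (diag * (Uᴴ * X))`. -/
lemma Pproj_mul (ψ : (Fin N → Fin d) → ℂ) (n : ℕ) (S : Finset (LtT d N n))
    {J : Type*} [Fintype J] (X : Matrix (LtT d N n) J ℂ) :
    Pproj ψ n S * X
      = Umat ψ n * (Matrix.diagonal (fun i => if i ∈ S then (1 : ℂ) else 0)
          * (star (Umat ψ n) * X)) := by
  rw [Pproj]
  rw [Matrix.mul_assoc, Matrix.mul_assoc]

lemma frob_Pproj_mul_le (ψ : (Fin N → Fin d) → ℂ) (n : ℕ) (S : Finset (LtT d N n))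
    {J : Type*} [Fintype J] (X : Matrix (LtT d N n) J ℂ) :
    frob (Pproj ψ n S * X) ≤ frob X := by
  rw [Pproj_mul, frob_unitary_left (Umat_mem ψ n)]
  have h1 : frob (Matrix.diagonal (fun i => if i ∈ S then (1 : ℂ) else 0)
      * (star (Umat ψ n) * X)) ≤ frob (star (Umat ψ n) * X) := by
    refine frob_diag_mul_le _ (fun i => ?_) _
    split <;> simp
  refine h1.trans ?_
  rw [frob_unitary_left (Unitary.star_mem (Umat_mem ψ n))]

/-- The truncation error at cut `n` equals the spectral tail. -/
lemma frob_sub_Pproj (ψ : (Fin N → Fin d) → ℂ) (n : ℕ) (S : Finset (LtT d N n)) :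
    frob (matn n ψ - Pproj ψ n S * matn n ψ)
      = Real.sqrt (∑ i ∈ Sᶜ, eig ψ n i) := by
  set M := matn n ψ with hM
  set B := star (Umat ψ n) * M with hB
  have hdec : M - Pproj ψ n S * M
      = Umat ψ n * ((1 - Matrix.diagonal (fun i => if i ∈ S then (1 : ℂ) else 0)) * B) := by
    rw [Matrix.sub_mul, Matrix.mul_sub, Matrix.one_mul, ← Matrix.mul_assoc,
      ← Matrix.mul_assoc, Umat_mul_star, Matrix.one_mul, Pproj_mul, hB,
      Matrix.mul_assoc]
  rw [hdec, frob_unitary_left (Umat_mem ψ n)]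
  -- compute the Frobenius norm squared
  have hBB : B * Bᴴ = Matrix.diagonal (Complex.ofReal ∘ eig ψ n) := by
    rw [hB, Matrix.conjTranspose_mul, show (star (Umat ψ n))ᴴ = Umat ψ n from by
      rw [Matrix.star_eq_conjTranspose, Matrix.conjTranspose_conjTranspose]]
    calc star (Umat ψ n) * M * (Mᴴ * Umat ψ n)
        = star (Umat ψ n) * rhoM ψ n * Umat ψ n := by
          rw [rhoM, Matrix.mul_assoc, Matrix.mul_assoc, Matrix.mul_assoc]
      _ = Matrix.diagonal (Complex.ofReal ∘ eig ψ n) := by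
          rw [rhoM_spectral ψ n]
          rw [← Matrix.mul_assoc, ← Matrix.mul_assoc, Umat_star_mul, Matrix.one_mul,
            Matrix.mul_assoc, Umat_star_mul, Matrix.mul_one]
  have hrow : ∀ i, ∑ z, ‖B i z‖ ^ 2 = eig ψ n i := by
    intro i
    have h2 : ((B * Bᴴ) i i).re = eig ψ n i := by
      rw [hBB]; simp [Matrix.diagonal_apply_eq]
    rw [← h2, Matrix.mul_apply, Complex.re_sum]
    refine Finset.sum_congr rfl fun z _ => ?_
    rw [Matrix.conjTranspose_apply,
      show star (B i z) = starRingEnd ℂ (B i z) from rfl, Complex.mul_conj,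
      Complex.ofReal_re, Complex.sq_norm]
  have hfs : frob ((1 - Matrix.diagonal (fun i => if i ∈ S then (1 : ℂ) else 0)) * B) ^ 2
      = ∑ i ∈ Sᶜ, eig ψ n i := by
    rw [frob_sq]
    have hone : (1 : Matrix (LtT d N n) (LtT d N n) ℂ)
        = Matrix.diagonal (fun _ => 1) := Matrix.diagonal_one.symm
    rw [hone, Matrix.diagonal_sub]
    calc ∑ i, ∑ z, ‖(Matrix.diagonal (fun i => 1 - if i ∈ S then (1:ℂ) else 0) * B) i z‖ ^ 2
        = ∑ i, ∑ z, (if i ∈ S then 0 else ‖B i z‖ ^ 2) := by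
          refine Finset.sum_congr rfl fun i _ => Finset.sum_congr rfl fun z _ => ?_
          rw [Matrix.diagonal_mul]
          by_cases hi : i ∈ S
          · simp [hi]
          · simp [hi]
      _ = ∑ i ∈ Sᶜ, ∑ z, ‖B i z‖ ^ 2 := by
          have h1 : ∑ i ∈ S, ∑ z : RtT d N n, (if i ∈ S then 0 else ‖B i z‖ ^ 2) = 0 := by
            refine Finset.sum_eq_zero fun i hi => ?_
            exact Finset.sum_eq_zero fun z _ => if_pos hi
          have h2 : ∑ i ∈ Sᶜ, ∑ z : RtT d N n, (if i ∈ S then 0 else ‖B i z‖ ^ 2)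
              = ∑ i ∈ Sᶜ, ∑ z : RtT d N n, ‖B i z‖ ^ 2 :=
            Finset.sum_congr rfl fun i hi =>
              Finset.sum_congr rfl fun z _ => if_neg (Finset.mem_compl.mp hi)
          rw [← Finset.sum_add_sum_compl S
            (fun i => ∑ z : RtT d N n, (if i ∈ S then 0 else ‖B i z‖ ^ 2)), h1, h2, zero_add]
      _ = ∑ i ∈ Sᶜ, eig ψ n i := Finset.sum_congr rfl fun i _ => hrow i
  rw [← hfs, Real.sqrt_sq (frob_nonneg _)]

lemma Pproj_apply (ψ : (Fin N → Fin d) → ℂ) (n : ℕ) (S : Finset (LtT d N n))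
    (x x' : LtT d N n) :
    Pproj ψ n S x x' = ∑ a ∈ S, Umat ψ n x a * star (Umat ψ n) a x' := by
  rw [Pproj, Matrix.mul_apply]
  calc ∑ a, (Umat ψ n * Matrix.diagonal (fun i => if i ∈ S then (1:ℂ) else 0)) x a
        * star (Umat ψ n) a x'
      = ∑ a, (if a ∈ S then Umat ψ n x a * star (Umat ψ n) a x' else 0) := by
        refine Finset.sum_congr rfl fun a _ => ?_
        rw [Matrix.mul_diagonal]
        split <;> simp
    _ = ∑ a ∈ S, Umat ψ n x a * star (Umat ψ n) a x' := by
        rw [Finset.sum_ite_mem, Finset.univ_inter]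

/-- Bound on the slice span of a spectrally truncated state. -/
lemma finrank_Vsp_Tcut_Pproj_le (ψ χ : (Fin N → Fin d) → ℂ) (n : ℕ)
    (S : Finset (LtT d N n)) :
    Module.finrank ℂ (Vsp n (Tcut n (Pproj ψ n S) χ)) ≤ S.card := by
  classical
  set Q : Matrix {a : LtT d N n // a ∈ S} (LtT d N n) ℂ :=
    Matrix.of (fun a y => star (Umat ψ n) a.1 y) with hQ
  set F := ((matn n χ).vecMulLinear).comp Q.vecMulLinear with hF
  have hsub : Vsp n (Tcut n (Pproj ψ n S) χ) ≤ LinearMap.range F := by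
    rw [Vsp, Submodule.span_le]
    rintro _ ⟨x, rfl⟩
    refine ⟨fun a => Umat ψ n x a.1, ?_⟩
    rw [hF, LinearMap.comp_apply]
    funext z
    rw [Matrix.vecMulLinear_apply, Matrix.vecMul, rfun]
    show _ = Tcut n (Pproj ψ n S) χ (mrg n x z)
    rw [Tcut, splitL_mrg, splitR_mrg, Matrix.mul_apply]
    refine Finset.sum_congr rfl fun x' _ => ?_
    show (Q.vecMulLinear (fun a => Umat ψ n x a.1)) x' * matn n χ x' z
      = Pproj ψ n S x x' * matn n χ x' z
    congr 1
    rw [Matrix.vecMulLinear_apply, Matrix.vecMul, Pproj_apply]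
    rw [Finset.sum_subtype S (fun a => Iff.rfl)
      (fun a => Umat ψ n x a * star (Umat ψ n) a x')]
    rfl
  calc Module.finrank ℂ (Vsp n (Tcut n (Pproj ψ n S) χ))
      ≤ Module.finrank ℂ (LinearMap.range F) := Submodule.finrank_mono hsub
    _ ≤ Module.finrank ℂ ({a : LtT d N n // a ∈ S} → ℂ) := LinearMap.finrank_range_le F
    _ = S.card := by rw [Module.finrank_fintype_fun_eq_card, Fintype.card_coe]

end Spectral

section TraceNormBound

variable {J : Type*} [Fintype J] [DecidableEq J]

/-- Rank-one "outer product" matrix `|a⟩⟨b|`. -/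
noncomputable def outer (a b : J → ℂ) : Matrix J J ℂ :=
  Matrix.of fun x y => a x * starRingEnd ℂ (b y)

lemma frob_outer (a b : J → ℂ) : frob (outer a b) = nrm a * nrm b := by
  have h : frob (outer a b) ^ 2 = (nrm a * nrm b) ^ 2 := by
    rw [frob_sq, mul_pow, nrm_sq, nrm_sq, Finset.sum_mul_sum]
    refine Finset.sum_congr rfl fun x _ => Finset.sum_congr rfl fun y _ => ?_
    rw [show outer a b x y = a x * starRingEnd ℂ (b y) from rfl, norm_mul, mul_pow,
      RCLike.norm_conj]
  have := congrArg Real.sqrt h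
  rwa [Real.sqrt_sq (frob_nonneg _),
    Real.sqrt_sq (mul_nonneg (nrm_nonneg _) (nrm_nonneg _))] at this

lemma isHermitian_outer_self (a : J → ℂ) : (outer a a).IsHermitian := by
  ext x y
  simp only [outer, Matrix.conjTranspose_apply, Matrix.of_apply, star_mul']
  rw [show star (starRingEnd ℂ (a x)) = a x from by simp,
    show star (a y) = starRingEnd ℂ (a y) from rfl]
  ring

lemma conj_sandwich_mul {U : Matrix J J ℂ} (hU : U ∈ Matrix.unitaryGroup J ℂ)
    (f g : J → ℝ) :
    (U * Matrix.diagonal (Complex.ofReal ∘ f) * star U)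
        * (U * Matrix.diagonal (Complex.ofReal ∘ g) * star U)
      = U * Matrix.diagonal (Complex.ofReal ∘ fun i => f i * g i) * star U := by
  have hUU : star U * U = 1 := Matrix.mem_unitaryGroup_iff'.mp hU
  calc (U * Matrix.diagonal (Complex.ofReal ∘ f) * star U)
        * (U * Matrix.diagonal (Complex.ofReal ∘ g) * star U)
      = U * Matrix.diagonal (Complex.ofReal ∘ f) * (star U * U)
          * Matrix.diagonal (Complex.ofReal ∘ g) * star U := by
        simp only [Matrix.mul_assoc]
    _ = U * (Matrix.diagonal (Complex.ofReal ∘ f) * Matrix.diagonal (Complex.ofReal ∘ g))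
          * star U := by rw [hUU]; simp only [Matrix.mul_one, Matrix.mul_assoc]
    _ = U * Matrix.diagonal (Complex.ofReal ∘ fun i => f i * g i) * star U := by
        rw [Matrix.diagonal_mul_diagonal]
        have he : (fun i => (Complex.ofReal ∘ f) i * (Complex.ofReal ∘ g) i)
            = Complex.ofReal ∘ fun i => f i * g i := by
          funext i
          simp [Complex.ofReal_mul]
        rw [he]

lemma trace_sandwich_re {U : Matrix J J ℂ} (hU : U ∈ Matrix.unitaryGroup J ℂ) (f : J → ℝ) :
    ((U * Matrix.diagonal (Complex.ofReal ∘ f) * star U).trace).re = ∑ i, f i := by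
  have hUU : star U * U = 1 := Matrix.mem_unitaryGroup_iff'.mp hU
  rw [Matrix.trace_mul_comm, ← Matrix.mul_assoc, hUU, Matrix.one_mul,
    Matrix.trace_diagonal, Complex.re_sum]
  simp

open scoped ComplexOrder in
lemma traceNorm_eq_sum_abs {M : Matrix J J ℂ} (hM : M.IsHermitian) :
    traceNorm M = ∑ i, |hM.eigenvalues i| := by
  set U := (hM.eigenvectorUnitary : Matrix J J ℂ) with hUdef
  have hUmem : U ∈ Matrix.unitaryGroup J ℂ := hM.eigenvectorUnitary.2
  set Babs := U * Matrix.diagonal (Complex.ofReal ∘ fun i => |hM.eigenvalues i|) * star U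
    with hBabs
  have hPSD : Babs.PosSemidef := by
    have hd : (Matrix.diagonal (Complex.ofReal ∘ fun i => |hM.eigenvalues i|)).PosSemidef :=
      Matrix.posSemidef_diagonal_iff.mpr fun i => by
        rw [show (Complex.ofReal ∘ fun i => |hM.eigenvalues i|) i
          = ((|hM.eigenvalues i| : ℝ) : ℂ) from rfl]
        exact_mod_cast Complex.zero_le_real.mpr (abs_nonneg _)
    have h2 := hd.mul_mul_conjTranspose_same U
    rwa [← Matrix.star_eq_conjTranspose] at h2
  have hspec : M = U * Matrix.diagonal (Complex.ofReal ∘ hM.eigenvalues) * star U :=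
    hM.spectral_theorem
  have hsq : Babs ^ 2 = Mᴴ * M := by
    rw [show Mᴴ = M from hM, pow_two, hBabs, conj_sandwich_mul hUmem]
    conv_rhs => rw [hspec]
    rw [conj_sandwich_mul hUmem]
    have he2 : (Complex.ofReal ∘ fun i => |hM.eigenvalues i| * |hM.eigenvalues i|)
        = Complex.ofReal ∘ fun i => hM.eigenvalues i * hM.eigenvalues i := by
      funext i
      exact congrArg Complex.ofReal (abs_mul_abs_self _)
    rw [he2]
  have hBs : ((Matrix.posSemidef_conjTranspose_mul_self M).1.eigenvectorUnitary.1 *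
      Matrix.diagonal (((↑) : ℝ → ℂ) ∘ (√·) ∘ (Matrix.posSemidef_conjTranspose_mul_self M).1.eigenvalues) *
      (star (Matrix.posSemidef_conjTranspose_mul_self M).1.eigenvectorUnitary : Matrix J J ℂ))
      = Babs := by
    open scoped MatrixOrder in
    calc _ = (Matrix.posSemidef_conjTranspose_mul_self M).1.cfc Real.sqrt := rfl
      _ = cfc Real.sqrt (Mᴴ * M) := ((Matrix.posSemidef_conjTranspose_mul_self M).1.cfc_eq _).symm
      _ = CFC.sqrt (Mᴴ * M) := by
        rw [CFC.sqrt_eq_real_sqrt (Mᴴ * M) (Matrix.posSemidef_conjTranspose_mul_self M).nonneg,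
          cfcₙ_eq_cfc (hf := Real.continuous_sqrt.continuousOn) (hf0 := Real.sqrt_zero)]
      _ = Babs := CFC.sqrt_unique (by rw [← sq]; exact hsq) hPSD.nonneg
  rw [traceNorm, hBs, hBabs, trace_sandwich_re hUmem]

lemma rank_outer_sub_le (a b : J → ℂ) : (outer a a - outer b b).rank ≤ 2 := by
  classical
  set Q : Matrix (Fin 2) J ℂ := Matrix.of (fun i => if i = 0 then a else b) with hQ
  have hsub : LinearMap.range (outer a a - outer b b).mulVecLin
      ≤ LinearMap.range Q.vecMulLinear := by
    rintro _ ⟨v, rfl⟩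
    refine ⟨![∑ y, starRingEnd ℂ (a y) * v y, -(∑ y, starRingEnd ℂ (b y) * v y)], ?_⟩
    funext x
    rw [Matrix.vecMulLinear_apply, Matrix.vecMul, Matrix.mulVecLin_apply, Matrix.mulVec]
    have e1 : ∀ u : J → ℂ,
        (∑ y, starRingEnd ℂ (u y) * v y) * u x
          = ∑ y, (u x * starRingEnd ℂ (u y)) * v y := by
      intro u
      rw [Finset.sum_mul]
      exact Finset.sum_congr rfl fun y _ => by ring
    calc (dotProduct ![∑ y, starRingEnd ℂ (a y) * v y,
            -(∑ y, starRingEnd ℂ (b y) * v y)] (fun i => Q i x))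
        = (∑ y, starRingEnd ℂ (a y) * v y) * a x
            - (∑ y, starRingEnd ℂ (b y) * v y) * b x := by
          rw [dotProduct, Fin.sum_univ_two]
          simp [hQ]
          ring
      _ = ∑ y, ((a x * starRingEnd ℂ (a y)) - b x * starRingEnd ℂ (b y)) * v y := by
          rw [e1, e1, ← Finset.sum_sub_distrib]
          exact Finset.sum_congr rfl fun y _ => by ring
      _ = dotProduct (fun y => (outer a a - outer b b) x y) v := by
          rw [dotProduct]
          exact Finset.sum_congr rfl fun y _ => by
            simp [outer, Matrix.sub_apply]
  calc (outer a a - outer b b).rank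
      = Module.finrank ℂ (LinearMap.range (outer a a - outer b b).mulVecLin) := rfl
    _ ≤ Module.finrank ℂ (LinearMap.range Q.vecMulLinear) := Submodule.finrank_mono hsub
    _ ≤ Module.finrank ℂ (Fin 2 → ℂ) := LinearMap.finrank_range_le _
    _ = 2 := by rw [Module.finrank_fintype_fun_eq_card, Fintype.card_fin]

lemma sum_abs_eig_le {M : Matrix J J ℂ} (hM : M.IsHermitian) (hrank : M.rank ≤ 2) :
    ∑ i, |hM.eigenvalues i| ≤ Real.sqrt 2 * frob M := by
  classical
  set lam := hM.eigenvalues with hlam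
  set U := (hM.eigenvectorUnitary : Matrix J J ℂ) with hUdef
  have hUmem : U ∈ Matrix.unitaryGroup J ℂ := hM.eigenvectorUnitary.2
  have hspec : M = U * Matrix.diagonal (Complex.ofReal ∘ lam) * star U :=
    hM.spectral_theorem
  set s := Finset.univ.filter (fun i => lam i ≠ 0) with hs
  have hcard : s.card ≤ 2 := by
    have h1 : Fintype.card {i // lam i ≠ 0} = s.card := Fintype.card_subtype _
    rw [← h1, ← hM.rank_eq_card_non_zero_eigs]
    exact hrank
  have h1 : ∑ i, |lam i| = ∑ i ∈ s, |lam i| := by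
    symm
    refine Finset.sum_subset (Finset.subset_univ s) fun i _ hi => ?_
    have : lam i = 0 := by
      by_contra hne
      exact hi (Finset.mem_filter.mpr ⟨Finset.mem_univ i, hne⟩)
    rw [this, abs_zero]
  have h2 : (∑ i ∈ s, |lam i|) ^ 2 ≤ (s.card : ℝ) * ∑ i ∈ s, |lam i| ^ 2 :=
    sq_sum_le_card_mul_sum_sq
  have h3 : ∑ i ∈ s, |lam i| ^ 2 ≤ ∑ i, lam i ^ 2 := by
    calc ∑ i ∈ s, |lam i| ^ 2 = ∑ i ∈ s, lam i ^ 2 :=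
          Finset.sum_congr rfl fun i _ => sq_abs _
      _ ≤ ∑ i, lam i ^ 2 := Finset.sum_le_sum_of_subset_of_nonneg
          (Finset.subset_univ s) fun i _ _ => sq_nonneg _
  have h4 : ∑ i, lam i ^ 2 = frob M ^ 2 := by
    rw [frob_sq_trace]
    have hMM : Mᴴ * M = U * Matrix.diagonal (Complex.ofReal ∘ fun i => lam i * lam i)
        * star U := by
      rw [show Mᴴ = M from hM]
      conv_lhs => rw [hspec]
      rw [conj_sandwich_mul hUmem]
    rw [hMM, trace_sandwich_re hUmem]
    exact Finset.sum_congr rfl fun i _ => (sq (lam i)).symm ▸ (pow_two (lam i))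
  have h5 : (∑ i, |lam i|) ^ 2 ≤ 2 * frob M ^ 2 := by
    rw [h1]
    refine h2.trans ?_
    have := h3.trans_eq h4
    have hcard' : (s.card : ℝ) ≤ 2 := by exact_mod_cast hcard
    have hnn : (0:ℝ) ≤ ∑ i ∈ s, |lam i| ^ 2 :=
      Finset.sum_nonneg fun i _ => sq_nonneg _
    calc (s.card : ℝ) * ∑ i ∈ s, |lam i| ^ 2 ≤ 2 * ∑ i ∈ s, |lam i| ^ 2 :=
          mul_le_mul_of_nonneg_right hcard' hnn
      _ ≤ 2 * frob M ^ 2 := by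
          refine mul_le_mul_of_nonneg_left ?_ (by norm_num)
          exact h3.trans_eq h4
  have habs : (0:ℝ) ≤ ∑ i, |lam i| := Finset.sum_nonneg fun i _ => abs_nonneg _
  calc ∑ i, |lam i| = Real.sqrt ((∑ i, |lam i|) ^ 2) := (Real.sqrt_sq habs).symm
    _ ≤ Real.sqrt (2 * frob M ^ 2) := Real.sqrt_le_sqrt h5
    _ = Real.sqrt 2 * frob M := by
        rw [Real.sqrt_mul (by norm_num), Real.sqrt_sq (frob_nonneg M)]

lemma traceNorm_outer_sub_le (a b : J → ℂ) (ha : nrm a ≤ 1) (hb : nrm b ≤ 1) :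
    traceNorm (outer a a - outer b b) ≤ 3 * nrm (a - b) := by
  have hH := (isHermitian_outer_self a).sub (isHermitian_outer_self b)
  rw [traceNorm_eq_sum_abs hH]
  have h1 := sum_abs_eig_le hH (rank_outer_sub_le a b)
  have h2 : frob (outer a a - outer b b) ≤ 2 * nrm (a - b) := by
    have hdecomp : outer a a - outer b b = outer a (a - b) + outer (a - b) b := by
      ext x y
      simp only [outer, Matrix.sub_apply, Matrix.add_apply, Matrix.of_apply, map_sub,
        Pi.sub_apply]
      ring
    rw [hdecomp]
    have htri : frob (outer a (a - b) + outer (a - b) b)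
        ≤ frob (outer a (a - b)) + frob (outer (a - b) b) := nrm_add_le _ _
    refine htri.trans ?_
    rw [frob_outer, frob_outer]
    have hd := nrm_nonneg (a - b)
    nlinarith [nrm_nonneg a, nrm_nonneg b]
  have hsqrt2 : Real.sqrt 2 ≤ 3 / 2 := by
    rw [show (3:ℝ)/2 = Real.sqrt ((3/2)^2) from (Real.sqrt_sq (by norm_num)).symm]
    exact Real.sqrt_le_sqrt (by norm_num)
  calc ∑ i, |hH.eigenvalues i| ≤ Real.sqrt 2 * frob (outer a a - outer b b) := h1
    _ ≤ Real.sqrt 2 * (2 * nrm (a - b)) :=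
        mul_le_mul_of_nonneg_left h2 (Real.sqrt_nonneg 2)
    _ ≤ (3/2) * (2 * nrm (a - b)) := by
        refine mul_le_mul_of_nonneg_right hsqrt2 ?_
        have := nrm_nonneg (a - b); linarith
    _ = 3 * nrm (a - b) := by ring

end TraceNormBound

/-- Telescoping error bound for iterated truncations. -/
lemma foldr_err {J : Type*} [Fintype J] (T : ℕ → (J → ℂ) → (J → ℂ)) (ψ : J → ℂ)
    (hcontr : ∀ n χ, nrm (T n χ) ≤ nrm χ)
    (hlin : ∀ n (χ χ' : J → ℂ), T n (χ - χ') = T n χ - T n χ') :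
    ∀ l : List ℕ, nrm (ψ - l.foldr T ψ) ≤ (l.map fun n => nrm (ψ - T n ψ)).sum := by
  intro l
  induction l with
  | nil => simp [List.foldr_nil, sub_self, nrm_zero]
  | cons n l ih =>
    have key : ψ - T n (l.foldr T ψ) = (ψ - T n ψ) + T n (ψ - l.foldr T ψ) := by
      rw [hlin]
      abel
    rw [List.foldr_cons, key, List.map_cons, List.sum_cons]
    calc nrm ((ψ - T n ψ) + T n (ψ - l.foldr T ψ))
        ≤ nrm (ψ - T n ψ) + nrm (T n (ψ - l.foldr T ψ)) := nrm_add_le _ _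
      _ ≤ nrm (ψ - T n ψ) + (l.map fun n => nrm (ψ - T n ψ)).sum := by
          have := (hcontr n (ψ - l.foldr T ψ)).trans ih
          linarith

end MPSAux

set_option maxHeartbeats 1000000 in
open MPSAux in
/-- **Efficient approximability by matrix-product states from bounded Renyi block
entropies.** If all blockwise α-Renyi entropies (for some fixed `α ∈ (0,1)`) of a sequence
of states are bounded by a constant `c`, then for every `δ > 0` the states can be
approximated in trace norm up to `δ` by MPS whose bond dimension grows only polynomially
in the chain length. -/
theorem mps_approximation_from_renyi_bound (d : ℕ) (hd : 2 ≤ d)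
    (α : ℝ) (hα0 : 0 < α) (hα1 : α < 1) (c : ℝ) (hc : 0 < c)
    (ψ : (N : ℕ) → (Fin N → Fin d) → ℂ)
    (hunit : ∀ N, ∑ x, ‖ψ N x‖ ^ 2 = 1)
    (hrenyi : ∀ N n : ℕ, 1 ≤ n → n ≤ N →
      renyiEntropy α (reduced (Finset.univ.filter fun i : Fin N => (i : ℕ) < n)
        (Matrix.of fun x y => ψ N x * starRingEnd ℂ (ψ N y))) ≤ c) :
    ∀ δ : ℝ, 0 < δ →
      ∃ P : Polynomial ℝ, ∀ N : ℕ,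
        ∃ (D : ℕ) (φ : (Fin N → Fin d) → ℂ),
          (D : ℝ) ≤ P.eval (N : ℝ) ∧
          IsMPSOpen D φ ∧
          (∑ x, ‖φ x‖ ^ 2 = 1) ∧
          traceNorm (Matrix.of fun x y =>
            ψ N x * starRingEnd ℂ (ψ N y) - φ x * starRingEnd ℂ (φ y)) ≤ δ := by
  intro δ hδ
  classical
  set η : ℝ := min (δ / 6) (4⁻¹) with hη
  have hηpos : 0 < η := lt_min (by linarith) (by norm_num)
  have hηle : η ≤ δ / 6 := min_le_left _ _
  have hηq : η ≤ 4⁻¹ := min_le_right _ _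
  set K : ℝ := (2 : ℝ) ^ ((1 - α) * c) with hKdef
  have hK1 : (1 : ℝ) ≤ K := by
    rw [show (1:ℝ) = (2:ℝ) ^ (0:ℝ) from (Real.rpow_zero 2).symm]
    exact Real.rpow_le_rpow_of_exponent_le one_le_two (by nlinarith)
  have hKpos : (0:ℝ) < K := by linarith
  set β : ℝ := α / (1 - α) with hβ
  have hβpos : 0 < β := div_pos hα0 (by linarith)
  set C1 : ℝ := K * ((K / η ^ 2) ^ β) with hC1
  have hC1pos : 0 < C1 := mul_pos hKpos (Real.rpow_pos_of_pos (by positivity) _)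
  set e : ℕ := ⌈2 * β⌉₊ with he
  refine ⟨Polynomial.C (C1 + 2) * (Polynomial.X + 1) ^ e, fun N => ?_⟩
  set R : ℝ := K * ((K * (N:ℝ) ^ 2 / η ^ 2) ^ β) with hR
  have hRnn : 0 ≤ R := by positivity
  set D : ℕ := ⌈R⌉₊ + 1 with hD
  have hD1 : 1 ≤ D := by omega
  have hDR : R ≤ (D : ℝ) := by
    have h0 := Nat.le_ceil R
    have h1 : ((⌈R⌉₊ : ℕ) : ℝ) ≤ ((D : ℕ) : ℝ) := by exact_mod_cast Nat.le_succ _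
    linarith
  have hDpos : (0:ℝ) < D := by
    have : (1:ℝ) ≤ (D:ℝ) := by exact_mod_cast hD1
    linarith
  -- polynomial bound on the bond dimension
  have hpoly : (D : ℝ) ≤ Polynomial.eval (N:ℝ)
      (Polynomial.C (C1 + 2) * (Polynomial.X + 1) ^ e) := by
    rw [Polynomial.eval_mul, Polynomial.eval_C, Polynomial.eval_pow, Polynomial.eval_add,
      Polynomial.eval_X, Polynomial.eval_one]
    have hDle : (D:ℝ) ≤ R + 2 := by
      have h0 : (⌈R⌉₊ : ℝ) < R + 1 := Nat.ceil_lt_add_one hRnn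
      have h1 : (D:ℝ) = (⌈R⌉₊ : ℝ) + 1 := by exact_mod_cast rfl
      linarith
    have hbase : (1:ℝ) ≤ (N:ℝ) + 1 := by
      have := Nat.cast_nonneg (α := ℝ) N
      linarith
    have hone : (1:ℝ) ≤ ((N:ℝ)+1) ^ e := one_le_pow₀ hbase
    have hRle : R ≤ C1 * ((N:ℝ) + 1) ^ e := by
      have h1 : (K * (N:ℝ)^2 / η^2 : ℝ) = (K/η^2) * (N:ℝ)^2 := by ring
      have h2 : ((K/η^2) * (N:ℝ)^2) ^ β = (K/η^2)^β * ((N:ℝ)^2)^β :=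
        Real.mul_rpow (by positivity) (by positivity)
      have h3 : (((N:ℝ)^2):ℝ)^β ≤ ((((N:ℝ)+1)^2):ℝ)^β := by
        apply Real.rpow_le_rpow (by positivity) ?_ hβpos.le
        nlinarith [Nat.cast_nonneg (α := ℝ) N]
      have h4 : ((((N:ℝ)+1)^2):ℝ)^β = ((N:ℝ)+1) ^ (2*β) := by
        rw [← Real.rpow_natCast ((N:ℝ)+1) 2, ← Real.rpow_mul (by positivity)]
        norm_num
      have h5 : ((N:ℝ)+1) ^ (2*β) ≤ ((N:ℝ)+1) ^ ((e:ℕ):ℝ) :=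
        Real.rpow_le_rpow_of_exponent_le hbase (Nat.le_ceil _)
      have h6 : ((N:ℝ)+1) ^ ((e:ℕ):ℝ) = ((N:ℝ)+1)^(e:ℕ) := Real.rpow_natCast _ _
      have hn2 : (0:ℝ) ≤ (K/η^2)^β := Real.rpow_nonneg (by positivity) _
      calc R = K * ((K/η^2) * (N:ℝ)^2) ^ β := by rw [hR, h1]
        _ = K * ((K/η^2)^β * ((N:ℝ)^2)^β) := by rw [h2]
        _ ≤ K * ((K/η^2)^β * (((N:ℝ)+1) ^ (2*β))) := by
            refine mul_le_mul_of_nonneg_left ?_ hKpos.le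
            exact mul_le_mul_of_nonneg_left (h3.trans_eq h4) hn2
        _ = C1 * ((N:ℝ)+1) ^ (2*β) := by rw [hC1]; ring
        _ ≤ C1 * ((N:ℝ)+1)^(e:ℕ) := by
            rw [← h6]
            exact mul_le_mul_of_nonneg_left h5 hC1pos.le
    calc (D:ℝ) ≤ R + 2 := hDle
      _ ≤ C1 * ((N:ℝ)+1)^e + 2 * ((N:ℝ)+1)^e := by nlinarith
      _ = (C1 + 2) * ((N:ℝ)+1)^e := by ring
  -- the state at length N
  set ψN : (Fin N → Fin d) → ℂ := ψ N with hψN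
  have hψnrm : nrm ψN = 1 := by rw [nrm, hunit N, Real.sqrt_one]
  -- truncation sets from the Renyi bound
  have hexS : ∀ n : ℕ, ∃ S : Finset (LtT d N n), S.card ≤ D ∧
      (1 ≤ n → n + 1 ≤ N →
        ∑ i ∈ Sᶜ, eig ψN n i ≤ K * (K / D) ^ ((1 - α) / α)) := by
    intro n
    by_cases hn : 1 ≤ n ∧ n + 1 ≤ N
    · obtain ⟨hn1, hn2⟩ := hn
      have hpow : ∑ i, eig ψN n i ^ α ≤ K := by
        have hr := hrenyi N n hn1 (by omega)
        have hr' : renyiEntropy α (reduced (Idx N n)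
            (Matrix.of fun x y => ψN x * starRingEnd ℂ (ψN y))) ≤ c := hr
        rw [reduced_eq_rhoM] at hr'
        unfold renyiEntropy at hr'
        rw [dif_pos (rhoM_psd ψN n).1] at hr'
        set t := ∑ i, eig ψN n i ^ α with ht
        rcases le_or_gt t 0 with h0 | h0
        · linarith
        · have hlb : Real.logb 2 t ≤ (1 - α) * c := by
            have h1α : (0:ℝ) < 1 - α := by linarith
            calc Real.logb 2 t = (1-α) * ((1/(1-α)) * Real.logb 2 t) := by
                  field_simp
              _ ≤ (1-α) * c := mul_le_mul_of_nonneg_left hr' h1α.le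
          exact (Real.logb_le_iff_le_rpow (by norm_num) h0).mp hlb
      obtain ⟨S, hcard, htail⟩ := tail_bound (eig ψN n) (eig_nonneg ψN n) hα0 hα1 hK1
        hpow D (by omega)
      exact ⟨S, hcard, fun _ _ => htail⟩
    · exact ⟨∅, by simp, fun h1 h2 => absurd ⟨h1, h2⟩ hn⟩
  choose Sn hScard hStail using hexS
  set T : ℕ → ((Fin N → Fin d) → ℂ) → ((Fin N → Fin d) → ℂ) :=
    fun n χ => Tcut n (Pproj ψN n (Sn n)) χ with hT
  set φ0 : (Fin N → Fin d) → ℂ := (List.range' 1 (N-1)).foldr T ψN with hφ0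
  -- error of the truncated state
  have hcontr : ∀ n χ, nrm (T n χ) ≤ nrm χ := by
    intro n χ
    calc nrm (T n χ) = frob (matn n (Tcut n (Pproj ψN n (Sn n)) χ)) := nrm_eq_frob_matn n _
      _ = frob (Pproj ψN n (Sn n) * matn n χ) := by rw [matn_Tcut]
      _ ≤ frob (matn n χ) := frob_Pproj_mul_le ψN n (Sn n) _
      _ = nrm χ := (nrm_eq_frob_matn n χ).symm
  have hlin : ∀ n (χ χ' : (Fin N → Fin d) → ℂ), T n (χ - χ') = T n χ - T n χ' :=
    fun n χ χ' => Tcut_sub n _ χ χ'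
  have hterm : ∀ n ∈ List.range' 1 (N-1),
      nrm (ψN - T n ψN) ≤ Real.sqrt (K * (K / D) ^ ((1-α)/α)) := by
    intro n hn
    rw [List.mem_range'_1] at hn
    have h1 : nrm (ψN - T n ψN) = Real.sqrt (∑ i ∈ (Sn n)ᶜ, eig ψN n i) := by
      calc nrm (ψN - T n ψN) = frob (matn n (ψN - T n ψN)) := nrm_eq_frob_matn n _
        _ = frob (matn n ψN - Pproj ψN n (Sn n) * matn n ψN) := by
            rw [matn_sub, matn_Tcut]
        _ = Real.sqrt (∑ i ∈ (Sn n)ᶜ, eig ψN n i) := frob_sub_Pproj ψN n (Sn n)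
    rw [h1]
    exact Real.sqrt_le_sqrt (hStail n hn.1 (by omega))
  have hmain : nrm (ψN - φ0) ≤ η := by
    rcases Nat.eq_zero_or_pos N with h0 | hNpos
    · have hl : N - 1 = 0 := by omega
      rw [hφ0, hl]
      rw [show List.range' 1 0 = ([] : List ℕ) from rfl]
      rw [List.foldr_nil, sub_self, nrm_zero]
      exact hηpos.le
    · have herr := foldr_err T ψN hcontr hlin (List.range' 1 (N-1))
      have hsum : ((List.range' 1 (N-1)).map fun n => nrm (ψN - T n ψN)).sum
          ≤ (N:ℝ) * Real.sqrt (K * (K / D) ^ ((1-α)/α)) := by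
        have hbd := List.sum_le_card_nsmul ((List.range' 1 (N-1)).map
          fun n => nrm (ψN - T n ψN)) (Real.sqrt (K * (K / D) ^ ((1-α)/α))) ?hb
        case hb =>
          intro x hx
          rw [List.mem_map] at hx
          obtain ⟨n, hn, rfl⟩ := hx
          exact hterm n hn
        rw [List.length_map, List.length_range'] at hbd
        refine hbd.trans ?_
        rw [nsmul_eq_mul]
        have hc1 : ((N - 1 : ℕ) : ℝ) ≤ (N : ℝ) := by
          have : (N - 1 : ℕ) ≤ N := Nat.sub_le N 1
          exact_mod_cast this
        exact mul_le_mul_of_nonneg_right hc1 (Real.sqrt_nonneg _)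
      have hNr : (1:ℝ) ≤ (N:ℝ) := by exact_mod_cast hNpos
      have hKD : K * (K/D) ^ ((1-α)/α) ≤ (η / N)^2 := by
        set X : ℝ := K * (N:ℝ)^2 / η^2 with hX
        have hN2 : (0:ℝ) < (N:ℝ)^2 := by nlinarith
        have hXpos : 0 < X := by
          rw [hX]
          exact div_pos (mul_pos hKpos hN2) (by positivity)
        have hRX : R = K * X ^ β := by rw [hR, hX]
        have hRpos : 0 < R := by
          rw [hRX]
          exact mul_pos hKpos (Real.rpow_pos_of_pos hXpos _)
        have hγ : (0:ℝ) ≤ (1-α)/α := div_nonneg (by linarith) hα0.le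
        have hKR : K / (D:ℝ) ≤ K / R := by
          rw [div_le_div_iff₀ hDpos hRpos]
          exact mul_le_mul_of_nonneg_left hDR hKpos.le
        have hKRX : K / R = (X ^ β)⁻¹ := by
          rw [hRX]
          field_simp
        have hpw : (K / (D:ℝ)) ^ ((1-α)/α) ≤ (K / R) ^ ((1-α)/α) :=
          Real.rpow_le_rpow (by positivity) hKR hγ
        have hαne : α ≠ 0 := ne_of_gt hα0
        have h1αne : (1:ℝ) - α ≠ 0 := ne_of_gt (by linarith)
        have hXinv : (K / R) ^ ((1-α)/α) = X⁻¹ := by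
          rw [hKRX, Real.inv_rpow (Real.rpow_nonneg hXpos.le β),
            ← Real.rpow_mul hXpos.le,
            show β * ((1-α)/α) = 1 from by rw [hβ]; field_simp,
            Real.rpow_one]
        have hfin : K * X⁻¹ = (η / N)^2 := by
          have hNne : (N:ℝ) ≠ 0 := by linarith
          rw [hX]
          field_simp
        calc K * (K/D) ^ ((1-α)/α) ≤ K * (K/R) ^ ((1-α)/α) :=
              mul_le_mul_of_nonneg_left hpw hKpos.le
          _ = K * X⁻¹ := by rw [hXinv]
          _ = (η / N)^2 := hfin
      calc nrm (ψN - φ0) ≤ ((List.range' 1 (N-1)).map fun n => nrm (ψN - T n ψN)).sum :=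
            herr
        _ ≤ (N:ℝ) * Real.sqrt (K * (K / D) ^ ((1-α)/α)) := hsum
        _ ≤ (N:ℝ) * Real.sqrt ((η / N)^2) := by
            exact mul_le_mul_of_nonneg_left (Real.sqrt_le_sqrt hKD) (by positivity)
        _ = (N:ℝ) * (η / N) := by
            rw [Real.sqrt_sq (by positivity)]
        _ = η := by field_simp
  -- Schmidt rank bounds of the truncated state
  have hfoldV : ∀ (l : List ℕ) (χ : (Fin N → Fin d) → ℂ) (m : ℕ),
      (∀ j ∈ l, j ≤ m) → Vsp m (l.foldr T χ) ≤ Vsp m χ := by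
    intro l
    induction l with
    | nil => intro χ m _; exact le_refl _
    | cons j l ih =>
      intro χ m hj
      calc Vsp m ((j :: l).foldr T χ) = Vsp m (T j (l.foldr T χ)) := rfl
        _ ≤ Vsp m (l.foldr T χ) := Vsp_Tcut_le j m (hj j List.mem_cons_self) _ _
        _ ≤ Vsp m χ := ih χ m fun a ha => hj a (List.mem_cons_of_mem j ha)
  have hrank : ∀ n, n ≤ N → Module.finrank ℂ (Vsp n φ0) ≤ D := by
    intro n hn
    rcases Nat.eq_zero_or_pos n with rfl | hn1
    · -- n = 0 : a single slice
      have hU : Vsp 0 φ0 ≤ LinearMap.range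
          (LinearMap.toSpanSingleton ℂ (RtT d N 0 → ℂ) (rfun 0 φ0 default)) := by
        rw [Vsp, Submodule.span_le]
        rintro _ ⟨x, rfl⟩
        rw [Subsingleton.elim x default]
        exact ⟨1, one_smul _ _⟩
      calc Module.finrank ℂ (Vsp 0 φ0)
          ≤ Module.finrank ℂ (LinearMap.range
            (LinearMap.toSpanSingleton ℂ (RtT d N 0 → ℂ) (rfun 0 φ0 default))) :=
            Submodule.finrank_mono hU
        _ ≤ Module.finrank ℂ ℂ := LinearMap.finrank_range_le _
        _ = 1 := Module.finrank_self ℂ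
        _ ≤ D := hD1
    · rcases eq_or_lt_of_le hn with rfl | hnN
      · -- n = N : ambient space is one-dimensional
        have h1 := Submodule.finrank_le (Vsp n φ0)
        have h2 : Module.finrank ℂ (RtT d n n → ℂ) = 1 := by
          rw [Module.finrank_fintype_fun_eq_card, Fintype.card_unique]
        rw [h2] at h1
        omega
      · -- interior cut
        have hsplit : List.range' 1 (N-1)
            = List.range' 1 (n-1) ++ n :: List.range' (n+1) (N-1-n) := by
          have h1 : List.range' n (N - n) = n :: List.range' (n+1) (N-1-n) := by
            rw [show N - n = (N-1-n) + 1 from by omega, List.range'_succ]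
          have h2 := List.range'_append (s := 1) (m := n-1) (n := N-n) (step := 1)
          rw [show 1 + 1 * (n-1) = n from by omega,
            show (n - 1) + (N - n) = N - 1 from by omega] at h2
          rw [← h2, h1]
        have hstep : Module.finrank ℂ
            (Vsp n (T n ((List.range' (n+1) (N-1-n)).foldr T ψN))) ≤ D :=
          (finrank_Vsp_Tcut_Pproj_le ψN _ n (Sn n)).trans (hScard n)
        have hmono : Vsp n ((List.range' 1 (n-1)).foldr T
            (T n ((List.range' (n+1) (N-1-n)).foldr T ψN)))
            ≤ Vsp n (T n ((List.range' (n+1) (N-1-n)).foldr T ψN)) := by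
          refine hfoldV _ _ n fun j hj => ?_
          rw [List.mem_range'_1] at hj
          omega
        have hφ0eq : φ0 = (List.range' 1 (n-1)).foldr T
            (T n ((List.range' (n+1) (N-1-n)).foldr T ψN)) := by
          rw [hφ0, hsplit, List.foldr_append]
          rfl
        rw [hφ0eq]
        exact le_trans (Submodule.finrank_mono hmono) hstep
  have hMPS0 : IsMPSOpen D φ0 :=
    isMPSOpen_of_finrank_le D (by omega) hD1 φ0 hrank
  -- normalisation
  have hφ0nrm : |nrm φ0 - 1| ≤ η := by
    have h := abs_nrm_sub_nrm_le φ0 ψN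
    rw [hψnrm] at h
    refine h.trans ?_
    rw [nrm_sub_rev]
    exact hmain
  have hφ0pos : 0 < nrm φ0 := by
    have h1 : |nrm φ0 - 1| ≤ 4⁻¹ := hφ0nrm.trans hηq
    have h2 := abs_le.mp h1
    linarith [h2.1]
  set φ : (Fin N → Fin d) → ℂ := (((nrm φ0)⁻¹ : ℝ) : ℂ) • φ0 with hφdef
  have hφnrm : nrm φ = 1 := by
    rw [hφdef, nrm_smul, Complex.norm_real, Real.norm_eq_abs,
      abs_of_nonneg (inv_nonneg.mpr hφ0pos.le)]
    field_simp
  have hsum1 : ∑ x, ‖φ x‖ ^ 2 = 1 := by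
    have h2 := nrm_sq φ
    rw [hφnrm] at h2
    simpa using h2.symm
  have hMPS : IsMPSOpen D φ := by
    obtain ⟨A, v, w, hrep⟩ := hMPS0
    refine ⟨A, (((nrm φ0)⁻¹ : ℝ) : ℂ) • v, w, fun x => ?_⟩
    have : φ x = (((nrm φ0)⁻¹ : ℝ) : ℂ) * φ0 x := rfl
    rw [this, hrep x, smul_dotProduct, smul_eq_mul]
  have hdist : nrm (ψN - φ) ≤ 2 * η := by
    have h1 : nrm (φ0 - φ) = |nrm φ0 - 1| := by
      have hsub : φ0 - φ = ((1 : ℂ) - (((nrm φ0)⁻¹ : ℝ) : ℂ)) • φ0 := by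
        funext x
        rw [Pi.sub_apply, Pi.smul_apply, smul_eq_mul, hφdef, Pi.smul_apply, smul_eq_mul]
        ring
      rw [hsub, nrm_smul]
      have hnn := hφ0pos
      rw [show (1 : ℂ) - (((nrm φ0)⁻¹ : ℝ) : ℂ) = (((1 - (nrm φ0)⁻¹ : ℝ)) : ℂ) by
        push_cast; ring]
      rw [Complex.norm_real, Real.norm_eq_abs]
      rw [show |1 - (nrm φ0)⁻¹| * nrm φ0 = |(1 - (nrm φ0)⁻¹) * nrm φ0| from by
        rw [abs_mul, abs_of_nonneg hφ0pos.le]]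
      rw [show (1 - (nrm φ0)⁻¹) * nrm φ0 = nrm φ0 - 1 from by
        field_simp]
    calc nrm (ψN - φ) ≤ nrm (ψN - φ0) + nrm (φ0 - φ) := nrm_triangle _ _ _
      _ ≤ η + η := by
          rw [h1]
          exact add_le_add hmain hφ0nrm
      _ = 2 * η := by ring
  refine ⟨D, φ, hpoly, hMPS, hsum1, ?_⟩
  have hmat : (Matrix.of fun x y =>
      ψ N x * starRingEnd ℂ (ψ N y) - φ x * starRingEnd ℂ (φ y))
      = outer ψN ψN - outer φ φ := by
    ext x y
    simp [outer, Matrix.sub_apply, hψN]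
  rw [hmat]
  have hfinal := traceNorm_outer_sub_le ψN φ (le_of_eq hψnrm) (le_of_eq hφnrm)
  refine hfinal.trans ?_
  calc 3 * nrm (ψN - φ) ≤ 3 * (2 * η) := by linarith [hdist]
    _ ≤ δ := by linarith [hηle]
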